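/- Let w : ℝ → ℂ be three times continuously differentiable on a neighborhood of t ∈ ℝ with deriv w nonvanishing on that neighborhood, and let σ : ℂ → ℂ be complex-differentiable of class C² on a neighborhood of w(t). Then deriv (fun τ => (deriv (fun u => σ (w u) / deriv w u) τ) / deriv w τ) t = (deriv (deriv σ)) (w t) − 2 · (deriv (deriv w) t) · (deriv σ (w t)) / (deriv w t)^2 − (deriv (deriv (deriv w)) t) · σ (w t) / (deriv w t)^3 + 3 · σ (w t) · (deriv (deriv w) t)^2 / (deriv w t)^4. -/

import Mathlib

/-- Second iterate of the operator `D_t g = ∂_t [g(t)/w'(t)]` applied to `σ ∘ w`: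
`D_t²[σ(w(t))] = σ''(w) - 2 w'' σ'(w)/w'² - w''' σ(w)/w'³ + 3 σ(w) w''²/w'⁴`. -/
theorem Dt_second_iterate (w : ℝ → ℂ) (σ : ℂ → ℂ) (t : ℝ)
    (U : Set ℝ) (hU : U ∈ nhds t) (hw : ContDiffOn ℝ 3 w U)
    (hne : ∀ τ ∈ U, deriv w τ ≠ 0)
    (V : Set ℂ) (hV : V ∈ nhds (w t)) (hσ : ContDiffOn ℂ 2 σ V) :
    deriv (fun τ => (deriv (fun u => σ (w u) / deriv w u) τ) / deriv w τ) t =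
      (deriv (deriv σ)) (w t)
        - 2 * (deriv (deriv w) t) * (deriv σ (w t)) / (deriv w t) ^ 2
        - (deriv (deriv (deriv w)) t) * σ (w t) / (deriv w t) ^ 3
        + 3 * σ (w t) * (deriv (deriv w) t) ^ 2 / (deriv w t) ^ 4 := by
  set s := interior U with hs
  have hso : IsOpen s := isOpen_interior
  have hts : t ∈ s := mem_interior_iff_mem_nhds.2 hU
  have hws : ContDiffOn ℝ 3 w s := hw.mono interior_subset
  set v := interior V with hv
  have hvo : IsOpen v := isOpen_interior
  have htv : w t ∈ v := mem_interior_iff_mem_nhds.2 hV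
  have hσv : ContDiffOn ℂ 2 σ v := hσ.mono interior_subset
  have hne' : ∀ τ ∈ s, deriv w τ ≠ 0 := fun τ hτ => hne τ (interior_subset hτ)
  -- derivatives of w on s
  have hw1 : ∀ τ ∈ s, HasDerivAt w (deriv w τ) τ := fun τ hτ =>
    ((hws.differentiableOn (by norm_num)).differentiableAt (hso.mem_nhds hτ)).hasDerivAt
  have hdw : ContDiffOn ℝ 2 (deriv w) s := hws.deriv_of_isOpen hso (by norm_num)
  have hw2 : ∀ τ ∈ s, HasDerivAt (deriv w) (deriv (deriv w) τ) τ := fun τ hτ =>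
    ((hdw.differentiableOn (by norm_num)).differentiableAt (hso.mem_nhds hτ)).hasDerivAt
  have hddw : ContDiffOn ℝ 1 (deriv (deriv w)) s := hdw.deriv_of_isOpen hso (by norm_num)
  have hw3 : HasDerivAt (deriv (deriv w)) (deriv (deriv (deriv w)) t) t :=
    ((hddw.differentiableOn (by norm_num)).differentiableAt (hso.mem_nhds hts)).hasDerivAt
  -- derivatives of σ on v
  have hσ1 : ∀ z ∈ v, HasDerivAt σ (deriv σ z) z := fun z hz =>
    ((hσv.differentiableOn (by norm_num)).differentiableAt (hvo.mem_nhds hz)).hasDerivAt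
  have hdσ : ContDiffOn ℂ 1 (deriv σ) v := hσv.deriv_of_isOpen hvo (by norm_num)
  have hσ2 : HasDerivAt (deriv σ) (deriv (deriv σ) (w t)) (w t) :=
    ((hdσ.differentiableOn (by norm_num)).differentiableAt (hvo.mem_nhds htv)).hasDerivAt
  -- eventual neighborhood facts
  have hcw : ContinuousAt w t := (hw1 t hts).continuousAt
  have ev_s : ∀ᶠ τ in nhds t, τ ∈ s := hso.mem_nhds hts
  have ev_v : ∀ᶠ τ in nhds t, w τ ∈ v := hcw.preimage_mem_nhds (hvo.mem_nhds htv)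
  have hne_t : deriv w t ≠ 0 := hne' t hts
  -- formula for the inner derivative, eventually near t
  have key : (fun τ => deriv (fun u => σ (w u) / deriv w u) τ / deriv w τ) =ᶠ[nhds t]
      fun τ => ((deriv σ (w τ) * deriv w τ * deriv w τ - σ (w τ) * deriv (deriv w) τ) /
        deriv w τ ^ 2) / deriv w τ := by
    filter_upwards [ev_s, ev_v] with τ hτs hτv
    have hσc : HasDerivAt (fun u => σ (w u)) (deriv σ (w τ) * deriv w τ) τ :=
      (hσ1 _ hτv).comp τ (hw1 τ hτs)
    have := (hσc.div (hw2 τ hτs) (hne' τ hτs)).deriv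
    exact congrArg (· / deriv w τ) this
  rw [Filter.EventuallyEq.deriv_eq key]
  -- now differentiate the closed form at t
  have hA : HasDerivAt (fun τ => deriv σ (w τ)) (deriv (deriv σ) (w t) * deriv w t) t :=
    hσ2.comp t (hw1 t hts)
  have hB : HasDerivAt (fun τ => σ (w τ)) (deriv σ (w t) * deriv w t) t :=
    (hσ1 _ htv).comp t (hw1 t hts)
  have hD := hw1 t hts
  have hDw := hw2 t hts
  have hN : HasDerivAt
      (fun τ => deriv σ (w τ) * deriv w τ * deriv w τ - σ (w τ) * deriv (deriv w) τ)
      ((deriv (deriv σ) (w t) * deriv w t * deriv w t + deriv σ (w t) * deriv (deriv w) t) *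
          deriv w t + deriv σ (w t) * deriv w t * deriv (deriv w) t -
        (deriv σ (w t) * deriv w t * deriv (deriv w) t +
          σ (w t) * deriv (deriv (deriv w)) t)) t :=
    ((hA.mul hDw).mul hDw).sub (hB.mul hw3)
  have hP : HasDerivAt (fun τ => deriv w τ ^ 2)
      (deriv (deriv w) t * deriv w t + deriv w t * deriv (deriv w) t) t := by
    have hm : HasDerivAt (fun τ => deriv w τ * deriv w τ) _ t := hDw.mul hDw
    simpa [pow_two] using hm
  have hQ := hN.div hP (pow_ne_zero 2 hne_t)
  have hG := hQ.div hDw hne_t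
  have hGd : deriv (fun τ => (deriv σ (w τ) * deriv w τ * deriv w τ - σ (w τ) * deriv (deriv w) τ) / deriv w τ ^ 2 / deriv w τ) t = _ := hG.deriv
  rw [hGd]
  simp only [Pi.div_apply]
  have h2 : deriv w t ^ 2 ≠ 0 := pow_ne_zero 2 hne_t
  field_simp
  ring
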